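/- Let R be a commutative ring and S a saturated multiplicative subset of R. If S satisfies the maximal multiple condition (there exists t ∈ S such that s divides t for every s ∈ S), then the localization R_S is a finitely presented R-module; in fact R_S is isomorphic to a direct summand of R as an R-module. -/

import Mathlib

/-- If a saturated multiplicative subset `S` of a commutative ring `R`
satisfies the maximal multiple condition, then `R_S` is a finitely presented `R`-module;
in fact `R_S` is (isomorphic to) a direct summand of `R` as an `R`-module. -/
theorem stmt0 {R : Type*} [CommRing R] (S : Submonoid R)
    (hsat : ∀ a b : R, a * b ∈ S → a ∈ S ∧ b ∈ S)
    (hmax : ∃ t ∈ S, ∀ s ∈ S, s ∣ t) :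
    Module.FinitePresentation R (Localization S) ∧
      ∃ (i : Localization S →ₗ[R] R) (p : R →ₗ[R] Localization S),
        p ∘ₗ i = LinearMap.id := by
  classical
  obtain ⟨t, htS, ht⟩ := hmax
  obtain ⟨u, hu⟩ := ht (t * t) (mul_mem htS htS)
  set e : R := t * u with he_def
  have hte : t * e = t := by rw [he_def, ← mul_assoc, ← hu]
  have hee : e * e = e := by
    calc e * e = (t * t * u) * u := by rw [he_def]; ring
    _ = e := by rw [← hu]
  set p : R →ₗ[R] Localization S := Algebra.linearMap R (Localization S) with hp_def
  -- p is surjective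
  have hsurj : Function.Surjective p := by
    intro x
    obtain ⟨⟨r, s⟩, rfl⟩ := IsLocalization.mk'_surjective S x
    obtain ⟨c, hc⟩ := ht s s.2
    refine ⟨r * c * u, ?_⟩
    show algebraMap R (Localization S) (r * c * u) = _
    rw [eq_comm, IsLocalization.mk'_eq_iff_eq_mul, ← map_mul,
      IsLocalization.eq_iff_exists S]
    exact ⟨⟨t, htS⟩, by simp only [Submonoid.mk_smul, smul_eq_mul]; linear_combination r * hu + r * u * t * hc⟩
  -- algebraMap e = 1
  have he1 : algebraMap R (Localization S) e = 1 := by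
    rw [show (1 : Localization S) = algebraMap R (Localization S) 1 from (map_one _).symm,
      IsLocalization.eq_iff_exists S]
    exact ⟨⟨t, htS⟩, by simpa using hte⟩
  -- kernel of p
  have hker : ∀ r : R, r ∈ LinearMap.ker p → e * r = 0 := by
    intro r hr
    have : algebraMap R (Localization S) r = 0 := hr
    rw [IsLocalization.map_eq_zero_iff S] at this
    obtain ⟨⟨s, hs⟩, hsr⟩ := this
    obtain ⟨c, hc⟩ := ht s hs
    have htr : t * r = 0 := by
      simp only [Submonoid.mk_smul, smul_eq_mul] at hsr
      rw [hc]; rw [mul_comm s c, mul_assoc, hsr, mul_zero]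
    calc e * r = u * (t * r) := by rw [he_def]; ring
    _ = 0 := by rw [htr, mul_zero]
  have hkerfg : (LinearMap.ker p).FG := by
    refine ⟨{1 - e}, le_antisymm ?_ ?_⟩
    · rw [Finset.coe_singleton, Submodule.span_singleton_le_iff_mem]
      show algebraMap R (Localization S) (1 - e) = 0
      rw [map_sub, map_one, he1, sub_self]
    · intro r hr
      rw [Finset.coe_singleton, Submodule.mem_span_singleton]
      exact ⟨r, by rw [smul_eq_mul, mul_sub, mul_one, mul_comm r e, hker r hr, sub_zero]⟩
  refine ⟨Module.finitePresentation_of_surjective p hsurj hkerfg, ?_⟩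
  -- the splitting
  set m : R →ₗ[R] R := LinearMap.lsmul R R e with hm_def
  have hle : LinearMap.ker p ≤ LinearMap.ker m := fun r hr => by
    simpa [hm_def, LinearMap.mem_ker, LinearMap.lsmul_apply, smul_eq_mul] using hker r hr
  set q : (R ⧸ LinearMap.ker p) →ₗ[R] R := Submodule.liftQ _ m hle with hq_def
  set E := p.quotKerEquivOfSurjective hsurj with hE_def
  refine ⟨q ∘ₗ (E.symm : Localization S →ₗ[R] R ⧸ LinearMap.ker p), p, ?_⟩
  ext x
  obtain ⟨r, rfl⟩ := hsurj x
  have hEr : E (Submodule.Quotient.mk r) = p r := rfl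
  have hEs : E.symm (p r) = Submodule.Quotient.mk r := by
    rw [← hEr, LinearEquiv.symm_apply_apply]
  simp only [LinearMap.comp_apply, LinearMap.id_apply, LinearEquiv.coe_coe, hEs]
  show p (m r) = p r
  simp only [hm_def, LinearMap.lsmul_apply, smul_eq_mul]
  show algebraMap R (Localization S) (e * r) = algebraMap R (Localization S) r
  rw [map_mul, he1, one_mul]
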